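/- Let f(t) = \sum_{k=0}^{\infty} c_k t^k be a power series with complex coefficients and radius of convergence R > 0, and let 0 < r < R. Then for every complex number s, the Fourier-Laplace transform of f is given by the contour integral formula (1/(2\pi i)) \oint_{|t|=r} f(t) \, e^{s/t} \, \frac{dt}{t} = \sum_{k=0}^{\infty} \frac{c_k}{k!} s^k, the series on the right converging. -/

import Mathlib

open Complex MeasureTheory Metric Set Function Filter

set_option maxHeartbeats 1000000

/-- Fourier–Laplace transform by contour integral: if `f(t) = ∑ c_k t^k` has radius of
convergence `R > 0` and `0 < r < R`, then for every `s ∈ ℂ`,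
`(1/(2πi)) ∮_{|t|=r} f(t) e^{s/t} dt/t = ∑_k (c_k/k!) s^k`, the series converging. -/
theorem fourier_laplace_transform_formula
    (c : ℕ → ℂ) (R r : ℝ) (hr : 0 < r) (hrR : r < R)
    (hconv : ∀ t : ℂ, ‖t‖ < R → Summable fun k : ℕ => c k * t ^ k) (s : ℂ) :
    HasSum (fun k : ℕ => c k / (k.factorial : ℂ) * s ^ k)
      ((1 / (2 * (Real.pi : ℂ) * Complex.I)) *
        ∮ t in C(0, r), (∑' k : ℕ, c k * t ^ k) * Complex.exp (s / t) / t) := by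
  have hr' : r ≠ 0 := hr.ne'
  set ρ : ℝ := (r + R) / 2 with hρ
  have hrρ : r < ρ := by rw [hρ]; linarith
  have hρR : ρ < R := by rw [hρ]; linarith
  have hρ0 : 0 < ρ := hr.trans hrρ
  clear_value ρ
  -- a uniform bound on `‖c k‖ * ρ ^ k`
  obtain ⟨M, hM⟩ : ∃ M : ℝ, ∀ k, ‖c k‖ * ρ ^ k ≤ M := by
    have h1 : Summable fun k => c k * (ρ : ℂ) ^ k := by
      apply hconv
      simpa [abs_of_pos hρ0] using hρR
    have h2 : Tendsto (fun k => ‖c k‖ * ρ ^ k) atTop (nhds 0) := by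
      have := h1.tendsto_atTop_zero.norm
      simpa [norm_mul, norm_pow, abs_of_pos hρ0] using this
    obtain ⟨M, hM⟩ := h2.bddAbove_range
    exact ⟨M, fun k => hM ⟨k, rfl⟩⟩
  have hM0 : 0 ≤ M := le_trans (by positivity) (hM 0)
  -- summability of `‖c k‖ * r ^ k`
  have hu : Summable fun k => ‖c k‖ * r ^ k := by
    refine Summable.of_nonneg_of_le (fun k => by positivity)
      (fun k => ?_) (((summable_geometric_of_lt_one (by positivity)
        ((div_lt_one hρ0).2 hrρ)).mul_left M))
    have : ‖c k‖ * r ^ k = (‖c k‖ * ρ ^ k) * (r / ρ) ^ k := by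
      rw [div_pow, mul_assoc, mul_div_assoc', mul_div_cancel_left₀ _ (pow_ne_zero k hρ0.ne')]
    rw [this]
    exact mul_le_mul_of_nonneg_right (hM k) (by positivity)
  have hv : Summable fun n : ℕ => (‖s‖ / r) ^ n / n.factorial :=
    Real.summable_pow_div_factorial _
  -- the double family
  set m : ℕ × ℕ → ℤ := fun p => (p.1 : ℤ) - p.2 - 1 with hm
  set g : ℕ × ℕ → ℂ → ℂ := fun p t => c p.1 * s ^ p.2 / (p.2.factorial : ℂ) * t ^ m p
    with hg
  -- Step 1: on the circle, the integrand equals the double sum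
  have step1 : EqOn (fun t : ℂ => (∑' k : ℕ, c k * t ^ k) * Complex.exp (s / t) / t)
      (fun t => ∑' p : ℕ × ℕ, g p t) (sphere (0 : ℂ) r) := by
    intro t ht
    have htn : ‖t‖ = r := by simpa using ht
    have ht0 : t ≠ 0 := by
      intro h
      rw [h] at htn
      simp at htn
      exact hr' htn.symm
    have hexp : Complex.exp (s / t) = ∑' n : ℕ, (s / t) ^ n / n.factorial := by
      rw [Complex.exp_eq_exp_ℂ, NormedSpace.exp_eq_tsum_div]
    have hfs : Summable fun k => ‖c k * t ^ k‖ := by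
      simpa [norm_mul, norm_pow, htn] using hu
    have hgs : Summable fun n : ℕ => ‖(s / t) ^ n / (n.factorial : ℂ)‖ := by
      have : ∀ n : ℕ, ‖(s / t) ^ n / (n.factorial : ℂ)‖
          = (‖s‖ / r) ^ n / n.factorial := by
        intro n
        simp [norm_div, norm_pow, htn, Complex.norm_natCast]
      simpa [this, htn] using hv
    simp only
    rw [hexp, tsum_mul_tsum_of_summable_norm hfs hgs, ← tsum_div_const]
    congr 1
    ext p
    rw [hg, hm]
    simp only
    rw [zpow_sub₀ ht0, zpow_sub₀ ht0, zpow_natCast, zpow_natCast, zpow_one, div_pow]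
    field_simp
  -- Step 2: swap the integral and the sum
  have hcont : ∀ p : ℕ × ℕ, Continuous fun θ : ℝ =>
      deriv (circleMap 0 r) θ • g p (circleMap 0 r θ) := by
    intro p
    simp only [hg, deriv_circleMap, smul_eq_mul]
    apply Continuous.mul
    · exact (continuous_circleMap 0 r).mul continuous_const
    · exact continuous_const.mul ((continuous_circleMap 0 r).zpow₀ (m p)
        fun θ => Or.inl (circleMap_ne_center hr'))
  have hnorm : ∀ (p : ℕ × ℕ) (θ : ℝ),
      ‖deriv (circleMap 0 r) θ • g p (circleMap 0 r θ)‖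
        = (‖c p.1‖ * r ^ p.1) * ((‖s‖ / r) ^ p.2 / p.2.factorial) := by
    intro p θ
    have hmap : ‖circleMap 0 r θ‖ = r := by
      simp [norm_circleMap_zero, abs_of_pos hr]
    simp only [hg, deriv_circleMap, smul_eq_mul, norm_mul, norm_div, norm_pow,
      norm_zpow, hmap, Complex.norm_natCast, Complex.norm_I, mul_one]
    rw [hm]
    simp only
    rw [zpow_sub₀ hr', zpow_sub₀ hr', zpow_natCast, zpow_natCast, zpow_one, div_pow]
    have hfac : (0 : ℝ) < p.2.factorial := by positivity
    field_simp
  have step2 : (∮ t in C(0, r), ∑' p : ℕ × ℕ, g p t)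
      = ∑' p : ℕ × ℕ, ∮ t in C(0, r), g p t := by
    simp only [circleIntegral]
    have hrw : ∀ θ : ℝ, (deriv (circleMap 0 r) θ) • (∑' p : ℕ × ℕ, g p (circleMap 0 r θ))
        = ∑' p : ℕ × ℕ, (deriv (circleMap 0 r) θ) • g p (circleMap 0 r θ) := by
      intro θ
      simp only [smul_eq_mul]
      exact (tsum_mul_left).symm
    simp_rw [hrw]
    rw [intervalIntegral.integral_of_le Real.two_pi_pos.le]
    rw [MeasureTheory.integral_tsum (fun p => ((hcont p).aestronglyMeasurable))]
    · congr 1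
      ext p
      rw [intervalIntegral.integral_of_le Real.two_pi_pos.le]
    · -- finiteness
      have hC : Summable fun p : ℕ × ℕ =>
          (‖c p.1‖ * r ^ p.1) * ((‖s‖ / r) ^ p.2 / p.2.factorial) :=
        hu.mul_of_nonneg hv (fun k => by positivity) (fun n => by positivity)
      have hCnn : ∀ p : ℕ × ℕ,
          0 ≤ (‖c p.1‖ * r ^ p.1) * ((‖s‖ / r) ^ p.2 / p.2.factorial) :=
        fun p => by positivity
      have hbound : ∀ p : ℕ × ℕ, (∫⁻ θ in Ioc (0:ℝ) (2*Real.pi),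
          ‖deriv (circleMap 0 r) θ • g p (circleMap 0 r θ)‖₊)
            ≤ ENNReal.ofReal ((‖c p.1‖ * r ^ p.1) * ((‖s‖ / r) ^ p.2 / p.2.factorial))
              * volume (Ioc (0:ℝ) (2*Real.pi)) := by
        intro p
        rw [← setLIntegral_const]
        apply lintegral_mono
        intro θ
        dsimp only
        rw [← ENNReal.ofReal_coe_nnreal, coe_nnnorm, hnorm p θ]
      have hle : (∑' p : ℕ × ℕ, ∫⁻ θ in Ioc (0:ℝ) (2*Real.pi),
            ‖deriv (circleMap 0 r) θ • g p (circleMap 0 r θ)‖₊)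
          ≤ ENNReal.ofReal (∑' p : ℕ × ℕ,
              (‖c p.1‖ * r ^ p.1) * ((‖s‖ / r) ^ p.2 / p.2.factorial))
              * volume (Ioc (0:ℝ) (2*Real.pi)) := by
        refine le_trans (ENNReal.tsum_le_tsum hbound) (le_of_eq ?_)
        rw [ENNReal.tsum_mul_right, ENNReal.ofReal_tsum_of_nonneg hCnn hC]
      refine ne_top_of_le_ne_top ?_ hle
      apply ENNReal.mul_ne_top ENNReal.ofReal_ne_top
      simp [Real.volume_Ioc, ENNReal.mul_eq_top]
  -- Step 3: compute each circle integral
  have step3 : ∀ p : ℕ × ℕ, (∮ t in C(0, r), g p t)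
      = if p.1 = p.2 then (2 * (Real.pi : ℂ) * Complex.I) * (c p.1 / (p.1.factorial : ℂ) * s ^ p.1)
        else 0 := by
    intro p
    have hsmul : (∮ t in C(0, r), g p t)
        = (c p.1 * s ^ p.2 / (p.2.factorial : ℂ)) * ∮ t in C(0, r), t ^ m p := by
      simp only [hg]
      have := circleIntegral.integral_smul (E := ℂ) (𝕜 := ℂ)
        (c p.1 * s ^ p.2 / (p.2.factorial : ℂ)) (fun t => t ^ m p) 0 r
      simpa [smul_eq_mul] using this
    have hzpow : (∮ t in C(0, r), t ^ m p)
        = ∮ t in C(0, r), (t - 0) ^ m p := by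
      congr 1
      ext t
      rw [sub_zero]
    by_cases hkn : p.1 = p.2
    · have hm1 : m p = -1 := by rw [hm]; simp [hkn]
      rw [hsmul, hzpow, hm1]
      have : (∮ t in C(0, r), (t - 0) ^ (-1 : ℤ)) = 2 * (Real.pi : ℂ) * Complex.I := by
        have := circleIntegral.integral_sub_inv_of_mem_ball
          (c := (0:ℂ)) (w := (0:ℂ)) (R := r) (by simpa using hr)
        simpa [zpow_neg_one] using this
      rw [this]
      simp only [if_pos hkn]
      rw [hkn]
      ring
    · have hm1 : m p ≠ -1 := by
        simp only [hm]
        intro h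
        exact hkn (by omega)
      rw [hsmul, hzpow, circleIntegral.integral_sub_zpow_of_ne hm1, if_neg hkn, mul_zero]
  -- Step 4: sum the diagonal
  have hdiag : Injective (fun k : ℕ => ((k, k) : ℕ × ℕ)) := fun a b h => (Prod.ext_iff.1 h).1
  have hsum4 : (∑' p : ℕ × ℕ, ∮ t in C(0, r), g p t)
      = (2 * (Real.pi : ℂ) * Complex.I) * ∑' k : ℕ, c k / (k.factorial : ℂ) * s ^ k := by
    simp_rw [step3]
    rw [← Function.Injective.tsum_eq hdiag ?hsupp]
    · simp only [if_pos rfl]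
      exact tsum_mul_left
    · intro p hp
      rcases eq_or_ne p.1 p.2 with h | h
      · exact ⟨p.1, by cases p; simp_all⟩
      · exfalso
        apply hp
        simp [if_neg h]
  -- summability of the target series
  have hS : Summable fun k : ℕ => c k / (k.factorial : ℂ) * s ^ k := by
    apply Summable.of_norm
    refine Summable.of_nonneg_of_le (fun k => norm_nonneg _) (fun k => ?_)
      ((Real.summable_pow_div_factorial (‖s‖ / ρ)).mul_left M)
    have h1 : ‖c k‖ ≤ M / ρ ^ k := (le_div_iff₀ (by positivity)).2 (hM k)
    have h2 : ‖c k / (k.factorial : ℂ) * s ^ k‖ = ‖c k‖ / k.factorial * ‖s‖ ^ k := by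
      simp [norm_mul, norm_div, norm_pow, Complex.norm_natCast]
    rw [h2]
    have hfac : (0 : ℝ) < k.factorial := by positivity
    calc ‖c k‖ / k.factorial * ‖s‖ ^ k ≤ (M / ρ ^ k) / k.factorial * ‖s‖ ^ k := by
          apply mul_le_mul_of_nonneg_right _ (by positivity)
          exact div_le_div_of_nonneg_right h1 hfac.le
      _ = M * ((‖s‖ / ρ) ^ k / k.factorial) := by
          rw [div_pow]
          ring
  -- conclusion
  have key : (∮ t in C(0, r), (∑' k : ℕ, c k * t ^ k) * Complex.exp (s / t) / t)
      = (2 * (Real.pi : ℂ) * Complex.I) * ∑' k : ℕ, c k / (k.factorial : ℂ) * s ^ k :=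
    (circleIntegral.integral_congr hr.le step1).trans (step2.trans hsum4)
  rw [key, one_div, inv_mul_cancel_left₀ (by
    simp [Real.pi_ne_zero, Complex.I_ne_zero, Complex.ofReal_ne_zero] : 
      (2 * (Real.pi : ℂ) * Complex.I) ≠ 0)]
  exact hS.hasSum
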